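/- arXiv:1712.01422 — 2 statements merged into one kernel-verified Lean document; each statement's English description precedes it below -/
import Mathlib

section
/- Let p > 3 be a prime, n, k integers coprime to p, χ a non-principal Dirichlet character mod p, and χ_L the Legendre symbol character. Then ∑_{m=1}^{p-1} χ_L(m)·|∑_{a=1}^{p-1} χ(m·a + n·ā)·e(k·a/p)|² = (χ_L(n·k²)·τ(χ_L)²/p)·(-(p-1) - ∑_{u=1}^{p-1} χ̄(u)·∑_{a=2}^{p-1} ((u·a-1)(u·ā-1) | p)). -/
open Finset Complex

/-- `e p x = e^{2πi x/p}` for `x : ZMod p`. -/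
noncomputable def e (p : ℕ) [NeZero p] (x : ZMod p) : ℂ :=
  Complex.exp (2 * Real.pi * Complex.I * x.val / p)

/-- Gauss sum `τ(f) = ∑_{a mod p} f(a) e^{2πia/p}` associated to `f : ZMod p → ℂ`. -/
noncomputable def gaussSum' (p : ℕ) [NeZero p] (f : ZMod p → ℂ) : ℂ :=
  ∑ a : ZMod p, f a * e p a

/-- The Legendre symbol character mod `p`, with complex values. -/
noncomputable def legChar (p : ℕ) [Fact p.Prime] : DirichletCharacter ℂ p :=
  (quadraticChar (ZMod p)).ringHomComp (Int.castRingHom ℂ)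

set_option linter.unusedSectionVars false

variable (p : ℕ) [Fact p.Prime]

lemma e_zero : e p 0 = 1 := by
  simp [e, ZMod.val_zero]

lemma e_add (x y : ZMod p) : e p (x + y) = e p x * e p y := by
  have hp : (p:ℂ) ≠ 0 := by exact_mod_cast (Fact.out : p.Prime).ne_zero
  rw [e, e, e, ← Complex.exp_add]
  have hv : (x.val + y.val : ℂ) = ((x+y).val : ℂ) + p * ((x.val + y.val) / p : ℕ) := by
    rw [ZMod.val_add]
    exact_mod_cast (Nat.mod_add_div (x.val + y.val) p).symm
  have h1 : Complex.exp ((((x.val + y.val) / p : ℕ) : ℂ) * (2 * Real.pi * Complex.I)) = 1 := by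
    exact_mod_cast Complex.exp_int_mul_two_pi_mul_I ((x.val + y.val) / p : ℕ)
  rw [show 2 * Real.pi * Complex.I * x.val / p + 2 * Real.pi * Complex.I * y.val / p
      = 2 * Real.pi * Complex.I * ((x.val:ℂ) + y.val) / p by ring, hv]
  rw [show 2 * Real.pi * Complex.I * (((x+y).val : ℂ) + p * ((x.val + y.val) / p : ℕ)) / p
      = 2 * Real.pi * Complex.I * ((x+y).val) / p + ((x.val + y.val) / p : ℕ) * (2 * Real.pi * Complex.I) by
    field_simp]
  rw [Complex.exp_add, h1, mul_one]

lemma e_ne_one {x : ZMod p} (hx : x ≠ 0) : e p x ≠ 1 := by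
  have hp : 0 < p := (Fact.out : p.Prime).pos
  intro h
  unfold e at h
  rw [Complex.exp_eq_one_iff] at h
  obtain ⟨m, hm⟩ := h
  have hpc : (p:ℂ) ≠ 0 := by exact_mod_cast hp.ne'
  have h2 : (2 * Real.pi * Complex.I : ℂ) ≠ 0 := by
    simp [Real.pi_ne_zero, Complex.I_ne_zero]
  have : (x.val : ℂ) = m * p := by
    have h3 : (2*Real.pi*Complex.I) * ((x.val:ℂ)/p) = (2*Real.pi*Complex.I) * m := by
      linear_combination hm
    have h4 := mul_left_cancel₀ h2 h3
    rwa [div_eq_iff hpc] at h4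
  have hz : (x.val : ℤ) = m * p := by exact_mod_cast this
  have hd : (p:ℤ) ∣ (x.val : ℤ) := ⟨m, by linarith [hz]⟩
  have hvlt : x.val < p := ZMod.val_lt x
  have hvne : x.val ≠ 0 := fun h0 => hx (by rwa [← ZMod.val_eq_zero] )
  have : (p:ℤ) ≤ (x.val:ℤ) := Int.le_of_dvd (by exact_mod_cast Nat.pos_of_ne_zero hvne) hd
  omega

lemma e_mul_inv (x : ZMod p) : e p x * e p (-x) = 1 := by
  rw [← e_add, add_neg_cancel, e_zero]

lemma e_conj (x : ZMod p) : (starRingEnd ℂ) (e p x) = e p (-x) := by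
  have h1 : (starRingEnd ℂ) (e p x) * e p x = 1 := by
    rw [e, ← Complex.exp_conj, ← Complex.exp_add]
    have : (starRingEnd ℂ) (2 * Real.pi * Complex.I * x.val / p) = -(2 * Real.pi * Complex.I * x.val / p) := by
      simp only [map_div₀, map_mul, Complex.conj_I, Complex.conj_natCast,
        Complex.conj_ofNat, Complex.conj_ofReal]
      ring
    rw [this, neg_add_cancel, Complex.exp_zero]
  have h2 := e_mul_inv p x
  have hne : e p x ≠ 0 := by
    rw [e]; exact Complex.exp_ne_zero _
  calc (starRingEnd ℂ) (e p x) = (starRingEnd ℂ) (e p x) * (e p x * e p (-x)) := by rw [h2, mul_one]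
    _ = ((starRingEnd ℂ) (e p x) * e p x) * e p (-x) := by ring
    _ = e p (-x) := by rw [h1, one_mul]

lemma sum_e (t : ZMod p) : ∑ x : ZMod p, e p (t * x) = if t = 0 then (p:ℂ) else 0 := by
  split_ifs with ht
  · subst ht
    simp only [zero_mul, e_zero]
    simp [ZMod.card]
  · have key : e p t * ∑ x : ZMod p, e p (t * x) = ∑ x : ZMod p, e p (t * x) := by
      rw [Finset.mul_sum]
      have : ∀ x : ZMod p, e p t * e p (t * x) = e p (t * (x + 1)) := by
        intro x; rw [mul_add, mul_one, e_add]; ring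
      rw [Finset.sum_congr rfl (fun x _ => this x)]
      exact Fintype.sum_equiv (Equiv.addRight 1) _ _ (fun x => rfl)
    have h2 : (e p t - 1) * ∑ x : ZMod p, e p (t * x) = 0 := by linear_combination key
    rcases mul_eq_zero.mp h2 with h | h
    · exact absurd (by linear_combination h) (e_ne_one p ht)
    · exact h

lemma sum_e_ne (t : ZMod p) :
    ∑ x ∈ univ.filter (fun x : ZMod p => x ≠ 0), e p (t * x)
      = (if t = 0 then (p:ℂ) else 0) - 1 := by
  have h := Finset.sum_filter_add_sum_filter_not (univ : Finset (ZMod p)) (fun x => x ≠ 0)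
    (fun x => e p (t * x))
  rw [sum_e] at h
  have h0 : univ.filter (fun x : ZMod p => ¬ x ≠ 0) = {0} := by
    ext x; simp
  rw [h0, Finset.sum_singleton, mul_zero, e_zero] at h
  linear_combination h

noncomputable def psi (p : ℕ) [Fact p.Prime] : AddChar (ZMod p) ℂ := ⟨e p, e_zero p, e_add p⟩

lemma psi_apply (x : ZMod p) : psi p x = e p x := rfl

lemma psi_primitive : (psi p).IsPrimitive := by
  apply AddChar.zmod_char_primitive_of_eq_one_only_at_zero
  intro a ha
  by_contra h
  exact e_ne_one p h ha

variable (hp : 3 < p)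
include hp

lemma ringChar_ne_two : ringChar (ZMod p) ≠ 2 := by
  rw [ZMod.ringChar_zmod_n]; omega

lemma legChar_ne_one : legChar p ≠ 1 := by
  exact (MulChar.ringHomComp_ne_one_iff (RingHom.injective_int _)).mpr
    (quadraticChar_ne_one (ringChar_ne_two p hp))

lemma gaussSum'_sq : gaussSum' p (legChar p) ^ 2 = legChar p (-1) * p := by
  have h : gaussSum' p (legChar p) = gaussSum (legChar p) (psi p) := rfl
  rw [h, gaussSum_sq (legChar_ne_one p hp) ((quadraticChar_isQuadratic (ZMod p)).comp _)
    (psi_primitive p)]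
  rw [ZMod.card]

omit hp

section charfacts
variable {p}
lemma fact_one_lt : Fact (1 < p) := ⟨(Fact.out : p.Prime).one_lt⟩

lemma q_zero : legChar p 0 = 0 := by
  haveI := fact_one_lt (p := p)
  exact MulChar.map_nonunit _ (by simp)

lemma q_sq {x : ZMod p} (hx : x ≠ 0) : legChar p x * legChar p x = 1 := by
  have h := quadraticChar_sq_one (F := ZMod p) hx
  rw [pow_two] at h
  have : legChar p x * legChar p x = (((quadraticChar (ZMod p) x * quadraticChar (ZMod p) x : ℤ)) : ℂ) := by
    simp [legChar, MulChar.ringHomComp_apply]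
  rw [this, h]; norm_num

lemma q_ne_zero {x : ZMod p} (hx : x ≠ 0) : legChar p x ≠ 0 := by
  intro h
  have := q_sq hx
  rw [h, mul_zero] at this
  exact zero_ne_one this

lemma q_inv (x : ZMod p) : legChar p x⁻¹ = legChar p x := by
  by_cases hx : x = 0
  · subst hx; rw [inv_zero]
  · have h1 : legChar p x * legChar p x⁻¹ = 1 := by
      rw [← map_mul, mul_inv_cancel₀ hx, map_one]
    have h2 := q_sq hx
    exact mul_left_cancel₀ (q_ne_zero hx) (h1.trans h2.symm)

lemma q_conj (x : ZMod p) : (starRingEnd ℂ) (legChar p x) = legChar p x := by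
  show (starRingEnd ℂ) (((quadraticChar (ZMod p) x : ℤ)) : ℂ) = _
  rw [map_intCast]; rfl

lemma sum_q (hp : 3 < p) : ∑ x ∈ univ.filter (fun x : ZMod p => x ≠ 0), legChar p x = 0 := by
  have h := Finset.sum_filter_add_sum_filter_not (univ : Finset (ZMod p)) (fun x => x ≠ 0)
    (fun x => legChar p x)
  rw [MulChar.sum_eq_zero_of_ne_one (legChar_ne_one p hp)] at h
  have h0 : univ.filter (fun x : ZMod p => ¬ x ≠ 0) = {0} := by ext x; simp
  rw [h0, Finset.sum_singleton, q_zero] at h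
  linear_combination h

variable (χ : DirichletCharacter ℂ p)

lemma chi_zero : χ 0 = 0 := by
  haveI := fact_one_lt (p := p)
  exact MulChar.map_nonunit _ (by simp)

lemma chi_norm {x : ZMod p} (hx : x ≠ 0) : χ x * (starRingEnd ℂ) (χ x) = 1 := by
  have hpow : (χ x) ^ (p - 1) = 1 := by
    rw [← map_pow, ZMod.pow_card_sub_one_eq_one hx, map_one]
  have hn : ‖χ x‖ = 1 := Complex.norm_eq_one_of_pow_eq_one hpow
    (by have := (Fact.out : p.Prime).one_lt; omega)
  rw [Complex.mul_conj]
  rw [Complex.normSq_eq_norm_sq]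
  rw [hn]
  norm_num

lemma chi_conj_mul {x : ZMod p} (hx : x ≠ 0) : (starRingEnd ℂ) (χ x) * χ x = 1 := by
  rw [mul_comm]; exact chi_norm χ hx

end charfacts

section more
variable {p}

lemma chi_sum (χ : DirichletCharacter ℂ p) (hχ : χ ≠ 1) :
    ∑ x ∈ univ.filter (fun x : ZMod p => x ≠ 0), χ x = 0 := by
  have h := Finset.sum_filter_add_sum_filter_not (univ : Finset (ZMod p)) (fun x => x ≠ 0)
    (fun x => χ x)
  rw [MulChar.sum_eq_zero_of_ne_one hχ] at h
  have h0 : univ.filter (fun x : ZMod p => ¬ x ≠ 0) = {0} := by ext x; simp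
  rw [h0, Finset.sum_singleton, chi_zero] at h
  linear_combination h

lemma chi_sum_conj (χ : DirichletCharacter ℂ p) (hχ : χ ≠ 1) :
    ∑ x ∈ univ.filter (fun x : ZMod p => x ≠ 0), (starRingEnd ℂ) (χ x) = 0 := by
  rw [← map_sum, chi_sum χ hχ, map_zero]

lemma chi_neg_one_conj (χ : DirichletCharacter ℂ p) :
    (starRingEnd ℂ) (χ (-1)) = χ (-1) := by
  have h : χ (-1) * χ (-1) = 1 := by
    rw [← map_mul]; norm_num
  rcases mul_self_eq_one_iff.mp h with h1 | h1 <;> rw [h1] <;> simp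

lemma coprime_ne_zero {m : ℤ} (hm : IsCoprime m (p:ℤ)) : ((m : ZMod p) ≠ 0) := by
  intro h
  rw [ZMod.intCast_zmod_eq_zero_iff_dvd] at h
  have := hm.isUnit_of_dvd' h dvd_rfl
  rw [Int.isUnit_iff] at this
  have hp2 := (Fact.out : p.Prime).two_le
  rcases this with h1 | h1 <;> omega

lemma sum_mul_shift {b : ZMod p} (hb : b ≠ 0) (F : ZMod p → ℂ) :
    ∑ x ∈ univ.filter (fun x : ZMod p => x ≠ 0), F (b * x)
      = ∑ x ∈ univ.filter (fun x : ZMod p => x ≠ 0), F x := by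
  apply Finset.sum_nbij' (i := fun x => b * x) (j := fun y => b⁻¹ * y)
  · intro a ha
    simp only [mem_filter, mem_univ, true_and] at ha ⊢
    exact mul_ne_zero hb ha
  · intro a ha
    simp only [mem_filter, mem_univ, true_and] at ha ⊢
    exact mul_ne_zero (inv_ne_zero hb) ha
  · intro a _; field_simp
  · intro a _; field_simp
  · intro a _; rfl

end more

section keylemma
variable {p}

lemma G_generic (χ : DirichletCharacter ℂ p) {c : ZMod p} (hc0 : c ≠ 0) (hc1 : c ≠ 1)
    (hcm : c ≠ -1) :
    ∑ v ∈ univ.filter (fun v : ZMod p => v ≠ 0),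
        legChar p v * χ (v * c + c⁻¹) * (starRingEnd ℂ) (χ (v + 1))
      = legChar p (-1) * ∑ u ∈ univ.filter (fun u : ZMod p => u ≠ 0),
          (starRingEnd ℂ) (χ u) * legChar p ((u * c - 1) * (u * c⁻¹ - 1)) := by
  have hC2 : c * c - 1 ≠ 0 := by
    intro h
    have hcc : c * c = 1 := by linear_combination h
    rcases mul_self_eq_one_iff.mp hcc with h1 | h1
    · exact hc1 h1
    · exact hcm h1
  have hA : c - c⁻¹ ≠ 0 := by
    intro h
    apply hC2
    have h2 : c = c⁻¹ := by linear_combination h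
    have h3 : c * c = 1 := by
      nth_rewrite 2 [h2]
      exact mul_inv_cancel₀ hc0
    linear_combination h3
  -- restrict LHS
  have hL : ∑ v ∈ univ.filter (fun v : ZMod p => v ≠ 0),
        legChar p v * χ (v * c + c⁻¹) * (starRingEnd ℂ) (χ (v + 1))
      = ∑ v ∈ univ.filter (fun v : ZMod p => v ≠ 0 ∧ v + 1 ≠ 0 ∧ v * c + c⁻¹ ≠ 0),
        legChar p v * χ (v * c + c⁻¹) * (starRingEnd ℂ) (χ (v + 1)) := by
    apply (Finset.sum_subset ?_ ?_).symm
    · intro x hx; simp only [mem_filter, mem_univ, true_and] at hx ⊢; exact hx.1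
    · intro x hx hx'
      simp only [mem_filter, mem_univ, true_and, not_and, not_not] at hx hx'
      by_cases h1 : x + 1 = 0
      · rw [h1, chi_zero, map_zero, mul_zero]
      · rw [hx' hx h1, chi_zero, mul_zero, zero_mul]
  -- restrict RHS
  have hR : ∑ u ∈ univ.filter (fun u : ZMod p => u ≠ 0),
          (starRingEnd ℂ) (χ u) * legChar p ((u * c - 1) * (u * c⁻¹ - 1))
      = ∑ u ∈ univ.filter (fun u : ZMod p => u ≠ 0 ∧ u * c - 1 ≠ 0 ∧ u * c⁻¹ - 1 ≠ 0),
          (starRingEnd ℂ) (χ u) * legChar p ((u * c - 1) * (u * c⁻¹ - 1)) := by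
    apply (Finset.sum_subset ?_ ?_).symm
    · intro x hx; simp only [mem_filter, mem_univ, true_and] at hx ⊢; exact hx.1
    · intro x hx hx'
      simp only [mem_filter, mem_univ, true_and, not_and, not_not] at hx hx'
      by_cases h1 : x * c - 1 = 0
      · rw [h1, zero_mul, q_zero, mul_zero]
      · rw [hx' hx h1, mul_zero, q_zero, mul_zero]
  rw [hL, hR, Finset.mul_sum]
  apply Finset.sum_nbij' (i := fun v => (v + 1) * (v * c + c⁻¹)⁻¹)
    (j := fun u => (c - u) * (c * (u * c - 1))⁻¹)
  · -- i maps into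
    intro v hv
    simp only [mem_filter, mem_univ, true_and] at hv ⊢
    obtain ⟨hv0, hv1, hd⟩ := hv
    have hd' : v * c * c + 1 ≠ 0 := by
      have : v * c * c + 1 = (v * c + c⁻¹) * c := by field_simp
      rw [this]; exact mul_ne_zero hd hc0
    refine ⟨mul_ne_zero hv1 (inv_ne_zero hd), ?_, ?_⟩
    · have h1 : (v + 1) * (v * c + c⁻¹)⁻¹ * c - 1 = (c - c⁻¹) * (v * c + c⁻¹)⁻¹ := by
        field_simp [show v * c ^ 2 + 1 ≠ 0 by rwa [sq, ← mul_assoc]]; ring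
      rw [h1]
      exact mul_ne_zero hA (inv_ne_zero hd)
    · have h2 : (v + 1) * (v * c + c⁻¹)⁻¹ * c⁻¹ - 1 = (-v) * ((c - c⁻¹) * (v * c + c⁻¹)⁻¹) := by
        field_simp [show v * c ^ 2 + 1 ≠ 0 by rwa [sq, ← mul_assoc]]; ring
      rw [h2]
      exact mul_ne_zero (neg_ne_zero.mpr hv0) (mul_ne_zero hA (inv_ne_zero hd))
  · -- j maps into
    intro u hu
    simp only [mem_filter, mem_univ, true_and] at hu ⊢
    obtain ⟨hu0, h1, h2⟩ := hu
    have hcu : c * (u * c - 1) ≠ 0 := mul_ne_zero hc0 h1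
    refine ⟨?_, ?_, ?_⟩
    · apply mul_ne_zero ?_ (inv_ne_zero hcu)
      intro h
      apply h2
      have hc : u = c := by linear_combination -h
      rw [hc, mul_inv_cancel₀ hc0, sub_self]
    · have e1 : (c - u) * (c * (u * c - 1))⁻¹ + 1 = u * (c * c - 1) * (c * (u * c - 1))⁻¹ := by
        field_simp [show c * u - 1 ≠ 0 by rwa [mul_comm]]; ring
      rw [e1]
      exact mul_ne_zero (mul_ne_zero hu0 hC2) (inv_ne_zero hcu)
    · have e2 : (c - u) * (c * (u * c - 1))⁻¹ * c + c⁻¹ = (c * c - 1) * (c * (u * c - 1))⁻¹ := by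
        field_simp [show c * u - 1 ≠ 0 by rwa [mul_comm]]; ring
      rw [e2]
      exact mul_ne_zero hC2 (inv_ne_zero hcu)
  · -- left inverse
    intro v hv
    simp only [mem_filter, mem_univ, true_and] at hv
    obtain ⟨hv0, hv1, hd⟩ := hv
    have hd' : v * c * c + 1 ≠ 0 := by
      have : v * c * c + 1 = (v * c + c⁻¹) * c := by field_simp
      rw [this]; exact mul_ne_zero hd hc0
    have h1 : (v + 1) * (v * c + c⁻¹)⁻¹ * c - 1 = (c - c⁻¹) * (v * c + c⁻¹)⁻¹ := by
      field_simp [show v * c ^ 2 + 1 ≠ 0 by rwa [sq, ← mul_assoc]]; ring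
    show (c - (v + 1) * (v * c + c⁻¹)⁻¹) * (c * ((v + 1) * (v * c + c⁻¹)⁻¹ * c - 1))⁻¹ = v
    rw [h1]
    field_simp [show c ^ 2 * v + 1 ≠ 0 by rwa [sq, mul_comm, ← mul_assoc], show c ^ 2 - 1 ≠ 0 by rwa [sq]]
    ring
  · -- right inverse
    intro u hu
    simp only [mem_filter, mem_univ, true_and] at hu
    obtain ⟨hu0, h1, h2⟩ := hu
    have hcu : c * (u * c - 1) ≠ 0 := mul_ne_zero hc0 h1
    show ((c - u) * (c * (u * c - 1))⁻¹ + 1) * ((c - u) * (c * (u * c - 1))⁻¹ * c + c⁻¹)⁻¹ = u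
    have e1 : (c - u) * (c * (u * c - 1))⁻¹ + 1 = u * (c * c - 1) * (c * (u * c - 1))⁻¹ := by
      field_simp [show c * u - 1 ≠ 0 by rwa [mul_comm]]; ring
    have e2 : (c - u) * (c * (u * c - 1))⁻¹ * c + c⁻¹ = (c * c - 1) * (c * (u * c - 1))⁻¹ := by
      field_simp [show c * u - 1 ≠ 0 by rwa [mul_comm]]; ring
    rw [e1, e2]
    field_simp [show c * u - 1 ≠ 0 by rwa [mul_comm], show c ^ 2 - 1 ≠ 0 by rwa [sq]]
  · -- term equality
    intro v hv
    simp only [mem_filter, mem_univ, true_and] at hv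
    obtain ⟨hv0, hv1, hd⟩ := hv
    have hd' : v * c * c + 1 ≠ 0 := by
      have : v * c * c + 1 = (v * c + c⁻¹) * c := by field_simp
      rw [this]; exact mul_ne_zero hd hc0
    set u := (v + 1) * (v * c + c⁻¹)⁻¹ with hu_def
    have h1 : u * c - 1 = (c - c⁻¹) * (v * c + c⁻¹)⁻¹ := by
      rw [hu_def]; field_simp [show v * c ^ 2 + 1 ≠ 0 by rwa [sq, ← mul_assoc]]; ring
    have h2 : u * c⁻¹ - 1 = (-1) * (v * ((c - c⁻¹) * (v * c + c⁻¹)⁻¹)) := by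
      rw [hu_def]; field_simp [show v * c ^ 2 + 1 ≠ 0 by rwa [sq, ← mul_assoc]]; ring
    have hw : (c - c⁻¹) * (v * c + c⁻¹)⁻¹ ≠ 0 := mul_ne_zero hA (inv_ne_zero hd)
    have hq : legChar p ((u * c - 1) * (u * c⁻¹ - 1)) = legChar p (-1) * legChar p v := by
      rw [h1, h2, show ((c - c⁻¹) * (v * c + c⁻¹)⁻¹) * ((-1) * (v * ((c - c⁻¹) * (v * c + c⁻¹)⁻¹)))
        = (-1 : ZMod p) * (v * (((c - c⁻¹) * (v * c + c⁻¹)⁻¹) * ((c - c⁻¹) * (v * c + c⁻¹)⁻¹))) by ring]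
      rw [map_mul, map_mul, map_mul, q_sq hw, mul_one]
    have hvu : v + 1 = u * (v * c + c⁻¹) := by
      rw [hu_def]; field_simp [show v * c ^ 2 + 1 ≠ 0 by rwa [sq, ← mul_assoc]]
    have hχv : (starRingEnd ℂ) (χ (v + 1))
        = (starRingEnd ℂ) (χ u) * (starRingEnd ℂ) (χ (v * c + c⁻¹)) := by
      rw [hvu, map_mul, map_mul]
    rw [hχv, hq]
    have hqq : legChar p (-1) * legChar p (-1) = 1 := q_sq (by
      intro h
      exact one_ne_zero (by linear_combination -h : (1 : ZMod p) = 0))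
    calc legChar p v * χ (v * c + c⁻¹) * ((starRingEnd ℂ) (χ u) * (starRingEnd ℂ) (χ (v * c + c⁻¹)))
        = (legChar p v * (starRingEnd ℂ) (χ u)) * (χ (v * c + c⁻¹) * (starRingEnd ℂ) (χ (v * c + c⁻¹))) := by ring
      _ = legChar p v * (starRingEnd ℂ) (χ u) := by rw [chi_norm χ hd, mul_one]
      _ = (legChar p (-1) * legChar p (-1)) * (legChar p v * (starRingEnd ℂ) (χ u)) := by rw [hqq, one_mul]
      _ = legChar p (-1) * ((starRingEnd ℂ) (χ u) * (legChar p (-1) * legChar p v)) := by ring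

end keylemma

section mainwork
variable {p}

lemma expand_T (χ : DirichletCharacter ℂ p) (n k m : ZMod p) :
    (∑ a ∈ univ.filter (fun a : ZMod p => a ≠ 0), χ (m * a + n * a⁻¹) * e p (k * a))
      * (starRingEnd ℂ) (∑ a ∈ univ.filter (fun a : ZMod p => a ≠ 0), χ (m * a + n * a⁻¹) * e p (k * a))
    = ∑ b ∈ univ.filter (fun b : ZMod p => b ≠ 0), ∑ c ∈ univ.filter (fun c : ZMod p => c ≠ 0),
        χ (m * (b * c) + n * (b * c)⁻¹) * (starRingEnd ℂ) (χ (m * b + n * b⁻¹))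
          * (e p (k * (b * c)) * e p (-(k * b))) := by
  rw [map_sum, Finset.sum_mul_sum, Finset.sum_comm]
  apply Finset.sum_congr rfl
  intro b hb
  simp only [mem_filter, mem_univ, true_and] at hb
  rw [← sum_mul_shift hb (fun a => (χ (m * a + n * a⁻¹) * e p (k * a))
    * (starRingEnd ℂ) (χ (m * b + n * b⁻¹) * e p (k * b)))]
  apply Finset.sum_congr rfl
  intro c hc
  rw [map_mul, e_conj]
  ring

lemma inner_m (χ : DirichletCharacter ℂ p) {n b c : ZMod p} (hn : n ≠ 0) (hb : b ≠ 0)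
    (hc : c ≠ 0) :
    ∑ m ∈ univ.filter (fun m : ZMod p => m ≠ 0),
        legChar p m * (χ (m * (b * c) + n * (b * c)⁻¹) * (starRingEnd ℂ) (χ (m * b + n * b⁻¹)))
      = legChar p n * ∑ v ∈ univ.filter (fun v : ZMod p => v ≠ 0),
          legChar p v * χ (v * c + c⁻¹) * (starRingEnd ℂ) (χ (v + 1)) := by
  have hbi : b⁻¹ ≠ 0 := inv_ne_zero hb
  rw [← sum_mul_shift (mul_ne_zero hbi hbi) (fun m =>
    legChar p m * (χ (m * (b * c) + n * (b * c)⁻¹) * (starRingEnd ℂ) (χ (m * b + n * b⁻¹))))]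
  have step1 : ∀ x ∈ univ.filter (fun x : ZMod p => x ≠ 0),
      legChar p (b⁻¹ * b⁻¹ * x) * (χ (b⁻¹ * b⁻¹ * x * (b * c) + n * (b * c)⁻¹)
        * (starRingEnd ℂ) (χ (b⁻¹ * b⁻¹ * x * b + n * b⁻¹)))
      = legChar p x * (χ (x * c + n * c⁻¹) * (starRingEnd ℂ) (χ (x + n))) := by
    intro x hx
    have harg1 : b⁻¹ * b⁻¹ * x * (b * c) + n * (b * c)⁻¹ = b⁻¹ * (x * c + n * c⁻¹) := by
      field_simp
    have harg2 : b⁻¹ * b⁻¹ * x * b + n * b⁻¹ = b⁻¹ * (x + n) := by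
      field_simp
    rw [harg1, harg2]
    simp only [map_mul]
    rw [show legChar p b⁻¹ * legChar p b⁻¹ * legChar p x
        * (χ b⁻¹ * χ (x * c + n * c⁻¹) * ((starRingEnd ℂ) (χ b⁻¹) * (starRingEnd ℂ) (χ (x + n))))
      = (legChar p b⁻¹ * legChar p b⁻¹) * (χ b⁻¹ * (starRingEnd ℂ) (χ b⁻¹))
        * (legChar p x * (χ (x * c + n * c⁻¹) * (starRingEnd ℂ) (χ (x + n)))) by ring]
    rw [q_sq hbi, chi_norm χ hbi, one_mul, one_mul]
  rw [Finset.sum_congr rfl step1]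
  rw [← sum_mul_shift hn (fun x => legChar p x * (χ (x * c + n * c⁻¹) * (starRingEnd ℂ) (χ (x + n))))]
  rw [Finset.mul_sum]
  apply Finset.sum_congr rfl
  intro v hv
  have harg1 : n * v * c + n * c⁻¹ = n * (v * c + c⁻¹) := by ring
  have harg2 : n * v + n = n * (v + 1) := by ring
  rw [harg1, harg2]
  simp only [map_mul]
  rw [show legChar p n * legChar p v * (χ n * χ (v * c + c⁻¹)
      * ((starRingEnd ℂ) (χ n) * (starRingEnd ℂ) (χ (v + 1))))
    = (χ n * (starRingEnd ℂ) (χ n)) * (legChar p n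
      * (legChar p v * χ (v * c + c⁻¹) * (starRingEnd ℂ) (χ (v + 1)))) by ring]
  rw [chi_norm χ hn, one_mul]

end mainwork

noncomputable def Gfun (p : ℕ) [Fact p.Prime] (χ : DirichletCharacter ℂ p) (c : ZMod p) : ℂ :=
  ∑ v ∈ univ.filter (fun v : ZMod p => v ≠ 0),
    legChar p v * χ (v * c + c⁻¹) * (starRingEnd ℂ) (χ (v + 1))

section evalG
variable {p} (hp : 3 < p) (χ : DirichletCharacter ℂ p)
include hp

lemma neg_one_ne_zero' : (-1 : ZMod p) ≠ 0 := by
  intro h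
  exact one_ne_zero (by linear_combination -h : (1 : ZMod p) = 0)

lemma aux_sum_chinorm : ∑ v ∈ univ.filter (fun v : ZMod p => v ≠ 0),
    legChar p v * (χ (v + 1) * (starRingEnd ℂ) (χ (v + 1))) = - legChar p (-1) := by
  have key : ∀ v ∈ univ.filter (fun v : ZMod p => v ≠ 0),
      legChar p v * (χ (v + 1) * (starRingEnd ℂ) (χ (v + 1)))
        = legChar p v - (if v = -1 then legChar p (-1) else 0) := by
    intro v hv
    by_cases h : v = -1
    · subst h
      rw [if_pos rfl, neg_add_cancel, chi_zero, zero_mul, mul_zero, sub_self]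
    · have hv1 : v + 1 ≠ 0 := fun h0 => h (by linear_combination h0)
      rw [chi_norm χ hv1, if_neg h, mul_one, sub_zero]
  rw [Finset.sum_congr rfl key, Finset.sum_sub_distrib, sum_q hp, Finset.sum_ite_eq']
  rw [if_pos (by simp [neg_one_ne_zero' hp] : (-1 : ZMod p) ∈ univ.filter (fun v : ZMod p => v ≠ 0))]
  ring

lemma G_one : Gfun p χ 1 = - legChar p (-1) := by
  rw [Gfun]
  rw [show ∑ v ∈ univ.filter (fun v : ZMod p => v ≠ 0),
      legChar p v * χ (v * 1 + 1⁻¹) * (starRingEnd ℂ) (χ (v + 1))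
    = ∑ v ∈ univ.filter (fun v : ZMod p => v ≠ 0),
      legChar p v * (χ (v + 1) * (starRingEnd ℂ) (χ (v + 1))) from
    Finset.sum_congr rfl (fun v _ => by rw [inv_one, mul_one]; ring)]
  exact aux_sum_chinorm hp χ

lemma G_negone : Gfun p χ (-1) = - (χ (-1) * legChar p (-1)) := by
  rw [Gfun]
  rw [show ∑ v ∈ univ.filter (fun v : ZMod p => v ≠ 0),
      legChar p v * χ (v * (-1) + (-1)⁻¹) * (starRingEnd ℂ) (χ (v + 1))
    = ∑ v ∈ univ.filter (fun v : ZMod p => v ≠ 0),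
      χ (-1) * (legChar p v * (χ (v + 1) * (starRingEnd ℂ) (χ (v + 1)))) from
    Finset.sum_congr rfl (fun v _ => by
      rw [show v * (-1) + (-1)⁻¹ = (-1) * (v + 1) by rw [inv_neg, inv_one]; ring, map_mul]
      ring)]
  rw [← Finset.mul_sum, aux_sum_chinorm hp χ]
  ring

end evalG

section evalK
variable {p} (hp : 3 < p) (χ : DirichletCharacter ℂ p)
include hp

lemma one_ne_negone : (1 : ZMod p) ≠ -1 := by
  intro h
  have h2 : ((2 : ℕ) : ZMod p) = 0 := by push_cast; linear_combination h
  rw [ZMod.natCast_eq_zero_iff] at h2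
  have := Nat.le_of_dvd (by norm_num) h2
  omega

lemma phi_split : univ.filter (fun c : ZMod p => c ≠ 0)
    = insert 1 (insert (-1) (univ.filter (fun c : ZMod p => c ≠ 0 ∧ c ≠ 1 ∧ c ≠ -1))) := by
  ext x
  simp only [mem_filter, mem_univ, true_and, mem_insert]
  constructor
  · intro hx
    by_cases h1 : x = 1
    · exact Or.inl h1
    by_cases h2 : x = -1
    · exact Or.inr (Or.inl h2)
    · exact Or.inr (Or.inr ⟨hx, h1, h2⟩)
  · rintro (h | h | ⟨h, _, _⟩)
    · rw [h]; exact one_ne_zero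
    · rw [h]; exact neg_one_ne_zero' hp
    · exact h

lemma phi1_split : univ.filter (fun a : ZMod p => a ≠ 0 ∧ a ≠ 1)
    = insert (-1) (univ.filter (fun c : ZMod p => c ≠ 0 ∧ c ≠ 1 ∧ c ≠ -1)) := by
  ext x
  simp only [mem_filter, mem_univ, true_and, mem_insert]
  constructor
  · rintro ⟨hx0, hx1⟩
    by_cases h2 : x = -1
    · exact Or.inl h2
    · exact Or.inr ⟨hx0, hx1, h2⟩
  · rintro (h | ⟨h0, h1, _⟩)
    · rw [h]
      exact ⟨neg_one_ne_zero' hp, fun hc => one_ne_negone hp hc.symm⟩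
    · exact ⟨h0, h1⟩

lemma one_notmem : (1 : ZMod p) ∉ insert (-1 : ZMod p)
    (univ.filter (fun c : ZMod p => c ≠ 0 ∧ c ≠ 1 ∧ c ≠ -1)) := by
  simp only [mem_insert, mem_filter, mem_univ, true_and, not_or]
  exact ⟨one_ne_negone hp, fun h => h.2.1 rfl⟩

lemma negone_notmem : (-1 : ZMod p) ∉
    univ.filter (fun c : ZMod p => c ≠ 0 ∧ c ≠ 1 ∧ c ≠ -1) := by
  simp only [mem_filter, mem_univ, true_and, not_and]
  intro _ _ h
  exact absurd rfl h

lemma aux_sum_usq (hχ : χ ≠ 1) :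
    ∑ u ∈ univ.filter (fun u : ZMod p => u ≠ 0),
        (starRingEnd ℂ) (χ u) * legChar p ((u + 1) * (u + 1)) = - χ (-1) := by
  have key : ∀ u ∈ univ.filter (fun u : ZMod p => u ≠ 0),
      (starRingEnd ℂ) (χ u) * legChar p ((u + 1) * (u + 1))
        = (starRingEnd ℂ) (χ u) - (if u = -1 then (starRingEnd ℂ) (χ (-1)) else 0) := by
    intro u hu
    by_cases h : u = -1
    · subst h
      rw [if_pos rfl, neg_add_cancel, zero_mul, q_zero, mul_zero, sub_self]
    · have hu1 : u + 1 ≠ 0 := fun h0 => h (by linear_combination h0)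
      rw [map_mul, q_sq hu1, if_neg h, mul_one, sub_zero]
  rw [Finset.sum_congr rfl key, Finset.sum_sub_distrib, chi_sum_conj χ hχ, Finset.sum_ite_eq']
  rw [if_pos (by simp [neg_one_ne_zero' hp] : (-1 : ZMod p) ∈ univ.filter (fun v : ZMod p => v ≠ 0))]
  rw [chi_neg_one_conj]
  ring

lemma C_split (hχ : χ ≠ 1) :
    ∑ u ∈ univ.filter (fun u : ZMod p => u ≠ 0), (starRingEnd ℂ) (χ u) *
        ∑ a ∈ univ.filter (fun a : ZMod p => a ≠ 0 ∧ a ≠ 1),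
          legChar p ((u * a - 1) * (u * a⁻¹ - 1))
      = (∑ u ∈ univ.filter (fun u : ZMod p => u ≠ 0), (starRingEnd ℂ) (χ u) *
          ∑ a ∈ univ.filter (fun a : ZMod p => a ≠ 0 ∧ a ≠ 1 ∧ a ≠ -1),
            legChar p ((u * a - 1) * (u * a⁻¹ - 1))) - χ (-1) := by
  have inner : ∀ u : ZMod p,
      ∑ a ∈ univ.filter (fun a : ZMod p => a ≠ 0 ∧ a ≠ 1),
          legChar p ((u * a - 1) * (u * a⁻¹ - 1))
        = legChar p ((u + 1) * (u + 1))
          + ∑ a ∈ univ.filter (fun a : ZMod p => a ≠ 0 ∧ a ≠ 1 ∧ a ≠ -1),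
            legChar p ((u * a - 1) * (u * a⁻¹ - 1)) := by
    intro u
    rw [phi1_split hp, Finset.sum_insert (negone_notmem hp)]
    congr 1
    rw [show u * (-1) - 1 = -(u + 1) by ring,
      show u * (-1 : ZMod p)⁻¹ - 1 = -(u+1) by rw [inv_neg, inv_one]; ring]
    rw [show (-(u+1)) * (-(u+1)) = (u+1) * (u+1) by ring]
  rw [Finset.sum_congr rfl (fun u _ => by rw [inner u, mul_add])]
  rw [Finset.sum_add_distrib, aux_sum_usq hp χ hχ]
  ring

lemma K_eq :
    ∑ c ∈ univ.filter (fun c : ZMod p => c ≠ 0 ∧ c ≠ 1 ∧ c ≠ -1), Gfun p χ c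
      = legChar p (-1) * ∑ u ∈ univ.filter (fun u : ZMod p => u ≠ 0), (starRingEnd ℂ) (χ u) *
          ∑ a ∈ univ.filter (fun a : ZMod p => a ≠ 0 ∧ a ≠ 1 ∧ a ≠ -1),
            legChar p ((u * a - 1) * (u * a⁻¹ - 1)) := by
  have step : ∀ c ∈ univ.filter (fun c : ZMod p => c ≠ 0 ∧ c ≠ 1 ∧ c ≠ -1),
      Gfun p χ c = ∑ u ∈ univ.filter (fun u : ZMod p => u ≠ 0),
        legChar p (-1) * ((starRingEnd ℂ) (χ u) * legChar p ((u * c - 1) * (u * c⁻¹ - 1))) := by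
    intro c hc
    simp only [mem_filter, mem_univ, true_and] at hc
    rw [Gfun, G_generic χ hc.1 hc.2.1 hc.2.2, Finset.mul_sum]
  rw [Finset.sum_congr rfl step, Finset.sum_comm]
  rw [Finset.mul_sum]
  apply Finset.sum_congr rfl
  intro u _
  rw [Finset.mul_sum, Finset.mul_sum]

end evalK

section main
variable {p}

lemma main_work (hp : 3 < p) (χ : DirichletCharacter ℂ p) (hχ : χ ≠ 1)
    {n k : ZMod p} (hn : n ≠ 0) (hk : k ≠ 0) :
    ∑ m ∈ univ.filter (fun m : ZMod p => m ≠ 0),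
      legChar p m * ((∑ a ∈ univ.filter (fun a : ZMod p => a ≠ 0),
          χ (m * a + n * a⁻¹) * e p (k * a))
        * (starRingEnd ℂ) (∑ a ∈ univ.filter (fun a : ZMod p => a ≠ 0),
          χ (m * a + n * a⁻¹) * e p (k * a)))
    = legChar p n * legChar p (-1) *
        (-((p : ℂ) - 1) - ∑ u ∈ univ.filter (fun u : ZMod p => u ≠ 0),
          (starRingEnd ℂ) (χ u) *
            ∑ a ∈ univ.filter (fun a : ZMod p => a ≠ 0 ∧ a ≠ 1),
              legChar p ((u * a - 1) * (u * a⁻¹ - 1))) := by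
  have step1 : ∑ m ∈ univ.filter (fun m : ZMod p => m ≠ 0),
      legChar p m * ((∑ a ∈ univ.filter (fun a : ZMod p => a ≠ 0),
          χ (m * a + n * a⁻¹) * e p (k * a))
        * (starRingEnd ℂ) (∑ a ∈ univ.filter (fun a : ZMod p => a ≠ 0),
          χ (m * a + n * a⁻¹) * e p (k * a)))
      = ∑ b ∈ univ.filter (fun b : ZMod p => b ≠ 0), ∑ c ∈ univ.filter (fun c : ZMod p => c ≠ 0),
          (legChar p n * Gfun p χ c) * (e p (k * (b * c)) * e p (-(k * b))) := by
    have h1 : ∀ m ∈ univ.filter (fun m : ZMod p => m ≠ 0),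
        legChar p m * ((∑ a ∈ univ.filter (fun a : ZMod p => a ≠ 0),
            χ (m * a + n * a⁻¹) * e p (k * a))
          * (starRingEnd ℂ) (∑ a ∈ univ.filter (fun a : ZMod p => a ≠ 0),
            χ (m * a + n * a⁻¹) * e p (k * a)))
        = ∑ b ∈ univ.filter (fun b : ZMod p => b ≠ 0),
            ∑ c ∈ univ.filter (fun c : ZMod p => c ≠ 0),
              legChar p m * (χ (m * (b * c) + n * (b * c)⁻¹)
                * (starRingEnd ℂ) (χ (m * b + n * b⁻¹)))
                * (e p (k * (b * c)) * e p (-(k * b))) := by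
      intro m _
      rw [expand_T χ n k m, Finset.mul_sum]
      apply Finset.sum_congr rfl
      intro b _
      rw [Finset.mul_sum]
      apply Finset.sum_congr rfl
      intro c _
      ring
    rw [Finset.sum_congr rfl h1, Finset.sum_comm]
    apply Finset.sum_congr rfl
    intro b hb
    simp only [mem_filter, mem_univ, true_and] at hb
    rw [Finset.sum_comm]
    apply Finset.sum_congr rfl
    intro c hc
    simp only [mem_filter, mem_univ, true_and] at hc
    rw [← Finset.sum_mul, inner_m χ hn hb hc]
    rfl
  rw [step1, Finset.sum_comm]
  have step2 : ∀ c ∈ univ.filter (fun c : ZMod p => c ≠ 0),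
      ∑ b ∈ univ.filter (fun b : ZMod p => b ≠ 0),
          (legChar p n * Gfun p χ c) * (e p (k * (b * c)) * e p (-(k * b)))
        = (legChar p n * Gfun p χ c) * ((if c = 1 then (p : ℂ) else 0) - 1) := by
    intro c hc
    have he : ∀ b : ZMod p, e p (k * (b * c)) * e p (-(k * b)) = e p ((k * (c - 1)) * b) := by
      intro b
      rw [← e_add]
      congr 1
      ring
    rw [Finset.sum_congr rfl (fun b _ => by rw [he b]), ← Finset.mul_sum, sum_e_ne]
    congr 2
    by_cases h : c = 1
    · rw [if_pos h, if_pos (by rw [h]; ring)]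
    · rw [if_neg h, if_neg (by
        intro h0
        rcases mul_eq_zero.mp h0 with h1 | h1
        · exact hk h1
        · exact h (by linear_combination h1))]
  rw [Finset.sum_congr rfl step2]
  -- now sum over c ∈ Φ of (q n * G c) * (ite - 1)
  have step3 : ∀ c ∈ univ.filter (fun c : ZMod p => c ≠ 0),
      (legChar p n * Gfun p χ c) * ((if c = 1 then (p : ℂ) else 0) - 1)
        = (if c = 1 then (legChar p n * Gfun p χ c) * (p : ℂ) else 0)
          - legChar p n * Gfun p χ c := by
    intro c _
    by_cases h : c = 1
    · rw [if_pos h, if_pos h]; ring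
    · rw [if_neg h, if_neg h]; ring
  rw [Finset.sum_congr rfl step3, Finset.sum_sub_distrib, Finset.sum_ite_eq']
  rw [if_pos (by simp : (1 : ZMod p) ∈ univ.filter (fun c : ZMod p => c ≠ 0))]
  rw [← Finset.mul_sum]
  have hsplit : ∑ c ∈ univ.filter (fun c : ZMod p => c ≠ 0), Gfun p χ c
      = Gfun p χ 1 + Gfun p χ (-1)
        + ∑ c ∈ univ.filter (fun c : ZMod p => c ≠ 0 ∧ c ≠ 1 ∧ c ≠ -1), Gfun p χ c := by
    rw [phi_split hp, Finset.sum_insert (one_notmem hp), Finset.sum_insert (negone_notmem hp)]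
    ring
  rw [hsplit, G_one hp χ, G_negone hp χ, K_eq hp χ, C_split hp χ hχ]
  ring

end main

theorem stmt_12 (p : ℕ) [Fact p.Prime] (hp : 3 < p) (n k : ℤ)
    (hn : IsCoprime n (p : ℤ)) (hk : IsCoprime k (p : ℤ))
    (χ : DirichletCharacter ℂ p) (hχ : χ ≠ 1) :
    ∑ m ∈ univ.filter (fun m : ZMod p => m ≠ 0),
      legChar p m * (‖∑ a ∈ univ.filter (fun a : ZMod p => a ≠ 0),
        χ ((m : ZMod p) * a + (n : ZMod p) * a⁻¹) * e p ((k : ZMod p) * a)‖ : ℝ) ^ 2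
      = legChar p ((n * k ^ 2 : ℤ) : ZMod p) * gaussSum' p (legChar p) ^ 2 / p
          * (-(p - 1) - ∑ u ∈ univ.filter (fun u : ZMod p => u ≠ 0),
              (starRingEnd ℂ) (χ u) *
                ∑ a ∈ univ.filter (fun a : ZMod p => a ≠ 0 ∧ a ≠ 1),
                  (legendreSym p (((u * a - 1) * (u * a⁻¹ - 1) : ZMod p).val : ℤ) : ℂ)) := by
  have hnz : (n : ZMod p) ≠ 0 := coprime_ne_zero hn
  have hkz : (k : ZMod p) ≠ 0 := coprime_ne_zero hk
  have habs : ∀ z : ℂ, (↑(‖z‖ : ℝ) : ℂ) ^ 2 = z * (starRingEnd ℂ) z := by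
    intro z
    calc ((‖z‖ : ℝ) : ℂ) ^ 2 = ((‖z‖ ^ 2 : ℝ) : ℂ) := by push_cast; ring
      _ = ((Complex.normSq z : ℝ) : ℂ) := by rw [Complex.sq_norm]
      _ = z * (starRingEnd ℂ) z := (Complex.mul_conj z).symm
  have hleg : ∀ x : ZMod p, ((legendreSym p ((x.val : ℤ)) : ℤ) : ℂ) = legChar p x := by
    intro x
    have hcast : (((x.val : ℤ)) : ZMod p) = x := by
      push_cast
      simp [ZMod.natCast_val, ZMod.cast_id]
    show ((quadraticChar (ZMod p) (((x.val : ℤ)) : ZMod p) : ℤ) : ℂ) = legChar p x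
    rw [hcast]
    rfl
  simp only [habs, hleg]
  rw [main_work hp χ hχ hnz hkz]
  have hfac : legChar p ((n * k ^ 2 : ℤ) : ZMod p) = legChar p (n : ZMod p) := by
    have hc : ((n * k ^ 2 : ℤ) : ZMod p) = (n : ZMod p) * ((k : ZMod p) * (k : ZMod p)) := by
      push_cast; ring
    rw [hc, map_mul, map_mul, q_sq hkz, mul_one]
  rw [hfac, gaussSum'_sq p hp]
  have hpne : (p : ℂ) ≠ 0 := by
    exact_mod_cast (Fact.out : p.Prime).ne_zero
  field_simp
end

section
/- Let p > 3 be a prime. The number of triples (u,a,b) ∈ (F_p^×)³ such that (u·a-1)(u·b̄-1)(b-1)² ≡ 0 and (u·b-1)(u·ā-1)(a-1)² ≡ 0 mod p equals 9p - 20. -/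
open Finset

variable {p : ℕ} [Fact p.Prime]

lemma card_filter_prod' {α β : Type*} [Fintype α] [Fintype β] [DecidableEq α] (Q : α × β → Prop) [DecidablePred Q] :
    (univ.filter Q).card = ∑ u : α, (univ.filter fun y => Q (u, y)).card := by
  rw [Finset.card_eq_sum_card_fiberwise (f := Prod.fst) (t := univ) (fun x _ => mem_univ _)]
  refine Finset.sum_congr rfl fun u _ => ?_
  refine Finset.card_bij' (fun x _ => x.2) (fun y _ => (u, y)) ?_ ?_ ?_ ?_ <;>
    simp (config := { contextual := true }) [Prod.ext_iff, eq_comm]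



lemma factor_iff (hp : 3 < p) (u a b : ZMod p) (hu : u ≠ 0) (ha : a ≠ 0) (hb : b ≠ 0) :
    (u * a - 1) * (u * b⁻¹ - 1) * (b - 1) ^ 2 = 0 ↔ (a = u⁻¹ ∨ b = u ∨ b = 1) := by
  rw [mul_eq_zero, mul_eq_zero, pow_eq_zero_iff (by norm_num : 2 ≠ 0),
    sub_eq_zero, sub_eq_zero, sub_eq_zero, mul_inv_eq_one₀ hb]
  constructor
  · rintro ((h | h) | h)
    · exact Or.inl (by field_simp [← h]; rw [mul_comm]; exact h)
    · exact Or.inr (Or.inl h.symm)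
    · exact Or.inr (Or.inr h)
  · rintro (h | h | h)
    · exact Or.inl (Or.inl (by field_simp [h]; rw [h, mul_inv_cancel₀ hu]))
    · exact Or.inl (Or.inr h.symm)
    · exact Or.inr h



lemma cardE : ((univ : Finset (ZMod p)).erase 0).card = p - 1 := by
  rw [Finset.card_erase_of_mem (mem_univ _), Finset.card_univ, ZMod.card]

lemma count_one (hp : 3 < p) :
    (univ.filter fun y : ZMod p × ZMod p => y.1 ≠ 0 ∧ y.2 ≠ 0 ∧
      (y.1 = (1:ZMod p)⁻¹ ∨ y.2 = 1 ∨ y.2 = 1) ∧ (y.2 = (1:ZMod p)⁻¹ ∨ y.1 = 1 ∨ y.1 = 1)).card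
      = 2 * p - 3 := by
  have hE : ((univ : Finset (ZMod p)).erase 0).card = p - 1 := cardE
  set E := (univ : Finset (ZMod p)).erase 0 with hEdef
  have hset : (univ.filter fun y : ZMod p × ZMod p => y.1 ≠ 0 ∧ y.2 ≠ 0 ∧
      (y.1 = (1:ZMod p)⁻¹ ∨ y.2 = 1 ∨ y.2 = 1) ∧ (y.2 = (1:ZMod p)⁻¹ ∨ y.1 = 1 ∨ y.1 = 1))
      = ({1} ×ˢ E) ∪ (E ×ˢ {1}) := by
    ext ⟨a, b⟩
    simp only [mem_filter, mem_univ, true_and, mem_union, mem_product, mem_singleton,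
      Finset.mem_erase, hEdef, inv_one]
    constructor
    · rintro ⟨ha, hb, h1 | h1 | h1, -⟩
      · exact Or.inl ⟨h1, hb, trivial⟩
      all_goals exact Or.inr ⟨⟨ha, trivial⟩, h1⟩
    · rintro (⟨h1, hb, -⟩ | ⟨⟨ha, -⟩, h1⟩)
      · exact ⟨by simp [h1], hb, Or.inl h1, Or.inr (Or.inl h1)⟩
      · exact ⟨ha, by simp [h1], Or.inr (Or.inl h1), Or.inl h1⟩
  have hinter : (({1} ×ˢ E) ∩ (E ×ˢ {1}) : Finset (ZMod p × ZMod p)) = {(1, 1)} := by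
    ext ⟨a, b⟩
    simp only [mem_inter, mem_product, mem_singleton, Finset.mem_erase, hEdef, mem_univ,
      and_true, Prod.mk.injEq]
    constructor
    · rintro ⟨⟨h1, -⟩, -, h2⟩; exact ⟨h1, h2⟩
    · rintro ⟨h1, h2⟩; exact ⟨⟨h1, by simp [h2]⟩, by simp [h1], h2⟩
  have := Finset.card_union_add_card_inter ({1} ×ˢ E) (E ×ˢ {1})
  rw [hinter, Finset.card_singleton, Finset.card_product, Finset.card_product,
    Finset.card_singleton, hE] at this
  rw [hset]
  omega



lemma count_neg_one (hp : 3 < p) :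
    (univ.filter fun y : ZMod p × ZMod p => y.1 ≠ 0 ∧ y.2 ≠ 0 ∧
      (y.1 = (-1:ZMod p)⁻¹ ∨ y.2 = -1 ∨ y.2 = 1) ∧ (y.2 = (-1:ZMod p)⁻¹ ∨ y.1 = -1 ∨ y.1 = 1)).card
      = 2 * p - 2 := by
  have hcard : Fintype.card (ZMod p) = p := ZMod.card p
  have hne : ((-1 : ZMod p)) ≠ 1 := @ZMod.neg_one_ne_one p ⟨by omega⟩
  have hn0 : ((-1 : ZMod p)) ≠ 0 := by
    simp only [ne_eq, neg_eq_zero]; exact one_ne_zero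
  have hinv : ((-1 : ZMod p))⁻¹ = -1 := by rw [inv_neg, inv_one]
  have hE : ((univ : Finset (ZMod p)).erase 0).card = p - 1 := by
    rw [Finset.card_erase_of_mem (mem_univ _), Finset.card_univ, hcard]
  set E := (univ : Finset (ZMod p)).erase 0 with hEdef
  have hset : (univ.filter fun y : ZMod p × ZMod p => y.1 ≠ 0 ∧ y.2 ≠ 0 ∧
      (y.1 = (-1:ZMod p)⁻¹ ∨ y.2 = -1 ∨ y.2 = 1) ∧ (y.2 = (-1:ZMod p)⁻¹ ∨ y.1 = -1 ∨ y.1 = 1))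
      = insert ((1:ZMod p), (1:ZMod p)) (({-1} ×ˢ E) ∪ (E ×ˢ {-1})) := by
    ext ⟨a, b⟩
    simp only [hinv, mem_filter, mem_univ, true_and, mem_insert, mem_union, mem_product,
      mem_singleton, Finset.mem_erase, hEdef, and_true, Prod.mk.injEq, ne_eq]
    constructor
    · rintro ⟨ha, hb, h1, h2⟩
      rcases eq_or_ne a (-1) with ha1 | ha1
      · exact Or.inr (Or.inl ⟨ha1, hb⟩)
      rcases eq_or_ne b (-1) with hb1 | hb1
      · exact Or.inr (Or.inr ⟨ha, hb1⟩)
      · have hb2 : b = 1 := by rcases h1 with h | h | h; exacts [absurd h ha1, absurd h hb1, h]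
        have ha2 : a = 1 := by rcases h2 with h | h | h; exacts [absurd h hb1, absurd h ha1, h]
        exact Or.inl ⟨ha2, hb2⟩
    · rintro (⟨h1, h2⟩ | ⟨h1, hb⟩ | ⟨ha, h2⟩)
      · subst h1; subst h2
        exact ⟨one_ne_zero, one_ne_zero, Or.inr (Or.inr rfl), Or.inr (Or.inr rfl)⟩
      · subst h1; exact ⟨hn0, hb, Or.inl rfl, Or.inr (Or.inl rfl)⟩
      · subst h2; exact ⟨ha, hn0, Or.inr (Or.inl rfl), Or.inl rfl⟩
  have hinter : (({-1} ×ˢ E) ∩ (E ×ˢ {-1}) : Finset (ZMod p × ZMod p)) = {(-1, -1)} := by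
    ext ⟨a, b⟩
    simp only [mem_inter, mem_product, mem_singleton, Finset.mem_erase, hEdef, mem_univ,
      and_true, Prod.mk.injEq, ne_eq]
    constructor
    · rintro ⟨⟨h1, -⟩, -, h2⟩; exact ⟨h1, h2⟩
    · rintro ⟨h1, h2⟩; exact ⟨⟨h1, by simp [h2, hn0]⟩, by simp [h1, hn0], h2⟩
  have hmem : ((1:ZMod p), (1:ZMod p)) ∉ (({-1} ×ˢ E) ∪ (E ×ˢ {-1}) : Finset (ZMod p × ZMod p)) := by
    simp only [mem_union, mem_product, mem_singleton, not_or, Prod.mk.injEq, not_and]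
    constructor
    · rintro h; exact absurd h.symm hne
    · rintro - h; exact hne h.symm
  have hu := Finset.card_union_add_card_inter ({-1} ×ˢ E) (E ×ˢ {-1})
  rw [hinter, Finset.card_singleton, Finset.card_product, Finset.card_product,
    Finset.card_singleton, hE] at hu
  rw [hset, Finset.card_insert_of_notMem hmem]
  omega



lemma count_gen (u : ZMod p) (hu : u ≠ 0) (h1 : u ≠ 1) (h2 : u ≠ -1) :
    (univ.filter fun y : ZMod p × ZMod p => y.1 ≠ 0 ∧ y.2 ≠ 0 ∧
      (y.1 = u⁻¹ ∨ y.2 = u ∨ y.2 = 1) ∧ (y.2 = u⁻¹ ∨ y.1 = u ∨ y.1 = 1)).card = 5 := by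
  have hiu0 : u⁻¹ ≠ 0 := inv_ne_zero hu
  have hiu1 : u⁻¹ ≠ 1 := by rw [ne_eq, inv_eq_one]; exact h1
  have hiuu : u⁻¹ ≠ u := by
    intro h
    have h3 := mul_inv_cancel₀ hu
    rw [h] at h3
    rcases mul_self_eq_one_iff.mp h3 with h' | h'
    exacts [h1 h', h2 h']
  have hset : (univ.filter fun y : ZMod p × ZMod p => y.1 ≠ 0 ∧ y.2 ≠ 0 ∧
      (y.1 = u⁻¹ ∨ y.2 = u ∨ y.2 = 1) ∧ (y.2 = u⁻¹ ∨ y.1 = u ∨ y.1 = 1))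
      = ({(u⁻¹, u⁻¹), (u, u), (u, 1), (1, u), (1, 1)} : Finset (ZMod p × ZMod p)) := by
    ext ⟨a, b⟩
    simp only [mem_filter, mem_univ, true_and, mem_insert, mem_singleton, Prod.mk.injEq, ne_eq]
    constructor
    · rintro ⟨ha, hb, hA, hB⟩
      rcases eq_or_ne a u⁻¹ with hau | hau
      · have hbv : b = u⁻¹ := by
          rcases hB with h | h | h
          · exact h
          · exact absurd (hau.symm.trans h) hiuu
          · exact absurd (hau.symm.trans h) hiu1
        exact Or.inl ⟨hau, hbv⟩
      · have hbv : b = u ∨ b = 1 := by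
          rcases hA with h | h | h
          exacts [absurd h hau, Or.inl h, Or.inr h]
        have hav : a = u ∨ a = 1 := by
          rcases hB with h | h | h
          · rcases hbv with h' | h'
            · exact absurd (h'.symm.trans h).symm hiuu
            · exact absurd (h'.symm.trans h).symm hiu1
          exacts [Or.inl h, Or.inr h]
        rcases hav with rfl | rfl <;> rcases hbv with rfl | rfl
        · exact Or.inr (Or.inl ⟨rfl, rfl⟩)
        · exact Or.inr (Or.inr (Or.inl ⟨rfl, rfl⟩))
        · exact Or.inr (Or.inr (Or.inr (Or.inl ⟨rfl, rfl⟩)))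
        · exact Or.inr (Or.inr (Or.inr (Or.inr ⟨rfl, rfl⟩)))
    · rintro (⟨rfl, rfl⟩ | ⟨rfl, rfl⟩ | ⟨rfl, rfl⟩ | ⟨rfl, rfl⟩ | ⟨rfl, rfl⟩)
      · exact ⟨hiu0, hiu0, Or.inl rfl, Or.inl rfl⟩
      · exact ⟨hu, hu, Or.inr (Or.inl rfl), Or.inr (Or.inl rfl)⟩
      · exact ⟨hu, one_ne_zero, Or.inr (Or.inr rfl), Or.inr (Or.inl rfl)⟩
      · exact ⟨one_ne_zero, hu, Or.inr (Or.inl rfl), Or.inr (Or.inr rfl)⟩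
      · exact ⟨one_ne_zero, one_ne_zero, Or.inr (Or.inr rfl), Or.inr (Or.inr rfl)⟩
  rw [hset]
  have h1' : (1 : ZMod p) ≠ u := fun h => h1 h.symm
  rw [Finset.card_insert_of_notMem (by simp [Prod.ext_iff, hiuu, hiu1]),
    Finset.card_insert_of_notMem (by simp [Prod.ext_iff, h1, h1']),
    Finset.card_insert_of_notMem (by simp [Prod.ext_iff, h1, h1']),
    Finset.card_insert_of_notMem (by simp [Prod.ext_iff, h1, h1']),
    Finset.card_singleton]

omit [Fact p.Prime] in
theorem stmt_16 (p : ℕ) [Fact p.Prime] (hp : 3 < p) :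
    ((univ.filter (fun x : ZMod p × ZMod p × ZMod p =>
        x.1 ≠ 0 ∧ x.2.1 ≠ 0 ∧ x.2.2 ≠ 0 ∧
        (x.1 * x.2.1 - 1) * (x.1 * x.2.2⁻¹ - 1) * (x.2.2 - 1) ^ 2 = 0 ∧
        (x.1 * x.2.2 - 1) * (x.1 * x.2.1⁻¹ - 1) * (x.2.1 - 1) ^ 2 = 0)).card : ℤ)
      = 9 * p - 20 := by
  have hne : ((-1 : ZMod p)) ≠ 1 := @ZMod.neg_one_ne_one p ⟨by omega⟩
  have hn0 : ((-1 : ZMod p)) ≠ 0 := by simp only [ne_eq, neg_eq_zero]; exact one_ne_zero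
  have key : (univ.filter (fun x : ZMod p × ZMod p × ZMod p =>
        x.1 ≠ 0 ∧ x.2.1 ≠ 0 ∧ x.2.2 ≠ 0 ∧
        (x.1 * x.2.1 - 1) * (x.1 * x.2.2⁻¹ - 1) * (x.2.2 - 1) ^ 2 = 0 ∧
        (x.1 * x.2.2 - 1) * (x.1 * x.2.1⁻¹ - 1) * (x.2.1 - 1) ^ 2 = 0)).card = 9 * p - 20 := by
    have hcongr : (univ.filter (fun x : ZMod p × ZMod p × ZMod p =>
        x.1 ≠ 0 ∧ x.2.1 ≠ 0 ∧ x.2.2 ≠ 0 ∧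
        (x.1 * x.2.1 - 1) * (x.1 * x.2.2⁻¹ - 1) * (x.2.2 - 1) ^ 2 = 0 ∧
        (x.1 * x.2.2 - 1) * (x.1 * x.2.1⁻¹ - 1) * (x.2.1 - 1) ^ 2 = 0))
        = univ.filter (fun x : ZMod p × ZMod p × ZMod p =>
          x.1 ≠ 0 ∧ x.2.1 ≠ 0 ∧ x.2.2 ≠ 0 ∧
          (x.2.1 = x.1⁻¹ ∨ x.2.2 = x.1 ∨ x.2.2 = 1) ∧
          (x.2.2 = x.1⁻¹ ∨ x.2.1 = x.1 ∨ x.2.1 = 1)) := by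
      refine Finset.filter_congr fun x _ => ?_
      constructor
      · rintro ⟨hu, ha, hb, hc1, hc2⟩
        exact ⟨hu, ha, hb, (factor_iff hp _ _ _ hu ha hb).mp hc1,
          (factor_iff hp _ _ _ hu hb ha).mp hc2⟩
      · rintro ⟨hu, ha, hb, hc1, hc2⟩
        exact ⟨hu, ha, hb, (factor_iff hp _ _ _ hu ha hb).mpr hc1,
          (factor_iff hp _ _ _ hu hb ha).mpr hc2⟩
    rw [hcongr, card_filter_prod' (α := ZMod p) (β := ZMod p × ZMod p)]
    have hfilter : (univ.filter (fun u : ZMod p => u = 0 ∨ u = 1 ∨ u = -1))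
        = ({0, 1, -1} : Finset (ZMod p)) := by
      ext u; simp
    rw [← Finset.sum_filter_add_sum_filter_not univ (fun u : ZMod p => u = 0 ∨ u = 1 ∨ u = -1),
      hfilter]
    have h01 : (0 : ZMod p) ≠ 1 := fun h => one_ne_zero h.symm
    have h0n : (0 : ZMod p) ≠ -1 := fun h => hn0 h.symm
    have hmem1 : (0 : ZMod p) ∉ ({1, -1} : Finset (ZMod p)) := by simp [h01, h0n]
    have hmem2 : (1 : ZMod p) ∉ ({-1} : Finset (ZMod p)) := by
      simp only [Finset.mem_singleton]
      exact fun h => hne h.symm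
    rw [Finset.sum_insert hmem1, Finset.sum_insert hmem2, Finset.sum_singleton]
    have hf0 : (univ.filter fun y : ZMod p × ZMod p => (0 : ZMod p) ≠ 0 ∧ y.1 ≠ 0 ∧ y.2 ≠ 0 ∧
        (y.1 = (0:ZMod p)⁻¹ ∨ y.2 = 0 ∨ y.2 = 1) ∧
        (y.2 = (0:ZMod p)⁻¹ ∨ y.1 = 0 ∨ y.1 = 1)).card = 0 := by
      rw [Finset.card_eq_zero]
      refine Finset.filter_false_of_mem fun y _ => ?_
      rintro ⟨h, -⟩; exact h rfl
    have hf1 : (univ.filter fun y : ZMod p × ZMod p => (1 : ZMod p) ≠ 0 ∧ y.1 ≠ 0 ∧ y.2 ≠ 0 ∧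
        (y.1 = (1:ZMod p)⁻¹ ∨ y.2 = 1 ∨ y.2 = 1) ∧
        (y.2 = (1:ZMod p)⁻¹ ∨ y.1 = 1 ∨ y.1 = 1)).card = 2 * p - 3 := by
      rw [show (univ.filter fun y : ZMod p × ZMod p => (1 : ZMod p) ≠ 0 ∧ y.1 ≠ 0 ∧ y.2 ≠ 0 ∧
        (y.1 = (1:ZMod p)⁻¹ ∨ y.2 = 1 ∨ y.2 = 1) ∧
        (y.2 = (1:ZMod p)⁻¹ ∨ y.1 = 1 ∨ y.1 = 1))
        = univ.filter fun y : ZMod p × ZMod p => y.1 ≠ 0 ∧ y.2 ≠ 0 ∧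
        (y.1 = (1:ZMod p)⁻¹ ∨ y.2 = 1 ∨ y.2 = 1) ∧
        (y.2 = (1:ZMod p)⁻¹ ∨ y.1 = 1 ∨ y.1 = 1) from
        Finset.filter_congr fun y _ => by simp]
      exact count_one hp
    have hfn : (univ.filter fun y : ZMod p × ZMod p => (-1 : ZMod p) ≠ 0 ∧ y.1 ≠ 0 ∧ y.2 ≠ 0 ∧
        (y.1 = (-1:ZMod p)⁻¹ ∨ y.2 = -1 ∨ y.2 = 1) ∧
        (y.2 = (-1:ZMod p)⁻¹ ∨ y.1 = -1 ∨ y.1 = 1)).card = 2 * p - 2 := by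
      rw [show (univ.filter fun y : ZMod p × ZMod p => (-1 : ZMod p) ≠ 0 ∧ y.1 ≠ 0 ∧ y.2 ≠ 0 ∧
        (y.1 = (-1:ZMod p)⁻¹ ∨ y.2 = -1 ∨ y.2 = 1) ∧
        (y.2 = (-1:ZMod p)⁻¹ ∨ y.1 = -1 ∨ y.1 = 1))
        = univ.filter fun y : ZMod p × ZMod p => y.1 ≠ 0 ∧ y.2 ≠ 0 ∧
        (y.1 = (-1:ZMod p)⁻¹ ∨ y.2 = -1 ∨ y.2 = 1) ∧
        (y.2 = (-1:ZMod p)⁻¹ ∨ y.1 = -1 ∨ y.1 = 1) from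
        Finset.filter_congr fun y _ => by simp [hn0]]
      exact count_neg_one hp
    rw [hf0, hf1, hfn]
    have hgen : ∀ u ∈ univ.filter (fun u : ZMod p => ¬(u = 0 ∨ u = 1 ∨ u = -1)),
        (univ.filter fun y : ZMod p × ZMod p => u ≠ 0 ∧ y.1 ≠ 0 ∧ y.2 ≠ 0 ∧
          (y.1 = u⁻¹ ∨ y.2 = u ∨ y.2 = 1) ∧ (y.2 = u⁻¹ ∨ y.1 = u ∨ y.1 = 1)).card = 5 := by
      intro u hu
      simp only [Finset.mem_filter, not_or] at hu
      obtain ⟨-, hu0, hu1, hun⟩ := hu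
      rw [show (univ.filter fun y : ZMod p × ZMod p => u ≠ 0 ∧ y.1 ≠ 0 ∧ y.2 ≠ 0 ∧
          (y.1 = u⁻¹ ∨ y.2 = u ∨ y.2 = 1) ∧ (y.2 = u⁻¹ ∨ y.1 = u ∨ y.1 = 1))
          = univ.filter fun y : ZMod p × ZMod p => y.1 ≠ 0 ∧ y.2 ≠ 0 ∧
          (y.1 = u⁻¹ ∨ y.2 = u ∨ y.2 = 1) ∧ (y.2 = u⁻¹ ∨ y.1 = u ∨ y.1 = 1) from
          Finset.filter_congr fun y _ => by simp [hu0]]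
      exact count_gen u hu0 hu1 hun
    rw [Finset.sum_congr rfl hgen, Finset.sum_const, smul_eq_mul]
    have hcardq : (univ.filter (fun u : ZMod p => u = 0 ∨ u = 1 ∨ u = -1)).card = 3 := by
      rw [hfilter, Finset.card_insert_of_notMem hmem1, Finset.card_insert_of_notMem hmem2,
        Finset.card_singleton]
    have htot := Finset.card_filter_add_card_filter_not
      (s := (univ : Finset (ZMod p))) (p := fun u : ZMod p => u = 0 ∨ u = 1 ∨ u = -1)
    rw [hcardq, Finset.card_univ, ZMod.card] at htot
    have : (univ.filter (fun u : ZMod p => ¬(u = 0 ∨ u = 1 ∨ u = -1))).card = p - 3 := by omega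
    rw [this]
    omega
  omega
end
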